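/- For two Hermitian matrices A₁, A₂ of size n (case d = 2), conditions (f) and (a) are equivalent: A₁ and A₂ are linearly independent over ℝ if and only if there exists V ∈ ℂⁿ with A₁V, A₂V linearly independent over ℂ. -/

import Mathlib

open Matrix

namespace CondAF

variable {n : ℕ}

/-- Two vectors are dependent iff all 2×2 minors vanish. -/
def Dep (x y : Fin n → ℂ) : Prop := ∀ i j, x i * y j = x j * y i

lemma dep_symm {x y : Fin n → ℂ} (h : Dep x y) : Dep y x := by
  intro i j
  linear_combination h j i

lemma dep_of_not_li {x y : Fin n → ℂ} (h : ¬ LinearIndependent ℂ ![x, y]) : Dep x y := by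
  rw [LinearIndependent.pair_iff] at h
  push_neg at h
  obtain ⟨s, t, hst, hne⟩ := h
  intro i j
  have hi := congrFun hst i
  have hj := congrFun hst j
  simp only [Pi.add_apply, Pi.smul_apply, smul_eq_mul, Pi.zero_apply] at hi hj
  by_cases ht : t = 0
  · have hs : s ≠ 0 := fun h0 => (hne h0) ht
    have hm : s * (x i * y j) = s * (x j * y i) := by
      linear_combination y j * hi - y i * hj
    exact mul_left_cancel₀ hs hm
  · have hm : t * (x i * y j) = t * (x j * y i) := by
      linear_combination x i * hj - x j * hi
    exact mul_left_cancel₀ ht hm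

lemma exists_smul_of_dep {x y : Fin n → ℂ} (h : Dep x y) (hx : x ≠ 0) :
    ∃ c : ℂ, y = c • x := by
  obtain ⟨i₀, hi₀⟩ := Function.ne_iff.mp hx
  refine ⟨y i₀ / x i₀, ?_⟩
  funext j
  have := h i₀ j
  simp only [Pi.smul_apply, smul_eq_mul, Pi.zero_apply] at *
  field_simp
  linear_combination this

lemma not_li_of_dep {x y : Fin n → ℂ} (h : Dep x y) :
    ¬ LinearIndependent ℂ ![x, y] := by
  by_cases hx : x = 0
  · intro hli
    have := (LinearIndependent.pair_iff.mp hli) 1 0 (by simp [hx])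
    exact one_ne_zero this.1
  · obtain ⟨c, hc⟩ := exists_smul_of_dep h hx
    intro hli
    have := (LinearIndependent.pair_iff.mp hli) c (-1) (by rw [hc]; module)
    exact (by norm_num : (-1 : ℂ) ≠ 0) this.2

lemma exists_mulVec_ne (A : Matrix (Fin n) (Fin n) ℂ) (hA : A ≠ 0) :
    ∃ V, A.mulVec V ≠ 0 := by
  by_contra h
  push_neg at h
  apply hA
  ext i j
  have := congrFun (h (Pi.single j 1)) i
  simpa [mulVec_single] using this

/-- If `B *ᵥ V₀ = 0`, then `A *ᵥ V₀` is dependent with every `B *ᵥ W`. -/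
lemma depL (A B : Matrix (Fin n) (Fin n) ℂ)
    (hdep : ∀ V, Dep (A.mulVec V) (B.mulVec V)) (V₀ : Fin n → ℂ)
    (hB0 : B.mulVec V₀ = 0) : ∀ W, Dep (A.mulVec V₀) (B.mulVec W) := by
  intro W i j
  have E1 := hdep (V₀ + (1 : ℂ) • W) i j
  have E2 := hdep (V₀ + (2 : ℂ) • W) i j
  simp only [mulVec_add, mulVec_smul, hB0, Pi.add_apply, Pi.smul_apply, Pi.zero_apply,
    smul_eq_mul, zero_add] at E1 E2
  linear_combination 2 * E1 - E2 / 2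

lemma range_lemma (A B : Matrix (Fin n) (Fin n) ℂ)
    (hdep : ∀ V, Dep (A.mulVec V) (B.mulVec V)) (hA : A ≠ 0)
    (hnot : ¬ ∃ l : ℂ, B = l • A) :
    ∃ u : Fin n → ℂ, u ≠ 0 ∧ (∀ W, ∃ c : ℂ, A.mulVec W = c • u) ∧
      (∀ W, ∃ c : ℂ, B.mulVec W = c • u) := by
  obtain ⟨V₀, hV₀⟩ := exists_mulVec_ne A hA
  set u := A.mulVec V₀ with hu
  obtain ⟨l₀, hl₀⟩ := exists_smul_of_dep (hdep V₀) hV₀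
  set B' := B - l₀ • A with hB'
  have hB'mul : ∀ V, B'.mulVec V = B.mulVec V - l₀ • A.mulVec V := by
    intro V
    simp [hB', sub_mulVec, smul_mulVec]
  have hdep' : ∀ V, Dep (A.mulVec V) (B'.mulVec V) := by
    intro V i j
    have h1 := hdep V i j
    rw [hB'mul]
    simp only [Pi.sub_apply, Pi.smul_apply, smul_eq_mul]
    linear_combination h1
  have hB'0 : B'.mulVec V₀ = 0 := by
    rw [hB'mul, hl₀, sub_self]
  have hL : ∀ W, Dep u (B'.mulVec W) := depL A B' hdep' V₀ hB'0
  have hB'span : ∀ W, ∃ c : ℂ, B'.mulVec W = c • u := fun W =>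
    exists_smul_of_dep (hL W) hV₀
  have hB'ne : B' ≠ 0 := by
    intro h
    exact hnot ⟨l₀, by rwa [hB', sub_eq_zero] at h⟩
  obtain ⟨W₁, hW₁⟩ := exists_mulVec_ne B' hB'ne
  obtain ⟨μ, hμ⟩ := hB'span W₁
  have hμ0 : μ ≠ 0 := by
    intro h
    exact hW₁ (by rw [hμ, h, zero_smul])
  -- First: A *ᵥ W₁ lies in the span of u.
  have hAW₁ : ∃ c : ℂ, A.mulVec W₁ = c • u := by
    have hBv : B'.mulVec (μ • V₀ + W₁) = μ • u := by
      rw [mulVec_add, mulVec_smul, hB'0, hμ, smul_zero, zero_add]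
    have hd := dep_symm (hdep' (μ • V₀ + W₁))
    rw [hBv, mulVec_add, mulVec_smul] at hd
    have hμu : μ • u ≠ 0 := smul_ne_zero hμ0 hV₀
    obtain ⟨c, hc⟩ := exists_smul_of_dep hd hμu
    refine ⟨c * μ - μ, ?_⟩
    funext k
    have h := congrFun hc k
    simp only [Pi.add_apply, Pi.smul_apply, smul_eq_mul] at h ⊢
    linear_combination h
  have hAspan : ∀ W, ∃ c : ℂ, A.mulVec W = c • u := by
    intro W
    obtain ⟨cW, hcW⟩ := hB'span W
    by_cases h0 : cW = 0
    · have hBv : B'.mulVec (W + W₁) = μ • u := by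
        rw [mulVec_add, hcW, h0, hμ, zero_smul, zero_add]
      have hd := dep_symm (hdep' (W + W₁))
      rw [hBv, mulVec_add] at hd
      have hμu : μ • u ≠ 0 := smul_ne_zero hμ0 hV₀
      obtain ⟨c, hc⟩ := exists_smul_of_dep hd hμu
      obtain ⟨c₁, hc₁⟩ := hAW₁
      refine ⟨c * μ - c₁, ?_⟩
      funext k
      have h := congrFun hc k
      have h1 := congrFun hc₁ k
      simp only [Pi.add_apply, Pi.smul_apply, smul_eq_mul] at h h1 ⊢
      linear_combination h - h1
    · have hd := dep_symm (hdep' W)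
      rw [hcW] at hd
      have hcu : cW • u ≠ 0 := smul_ne_zero h0 hV₀
      obtain ⟨c, hc⟩ := exists_smul_of_dep hd hcu
      exact ⟨c * cW, by rw [hc, smul_smul]⟩
  refine ⟨u, hV₀, hAspan, ?_⟩
  intro W
  obtain ⟨c, hc⟩ := hB'span W
  obtain ⟨c', hc'⟩ := hAspan W
  refine ⟨c + l₀ * c', ?_⟩
  have : B.mulVec W = B'.mulVec W + l₀ • A.mulVec W := by
    rw [hB'mul]; abel
  rw [this, hc, hc', smul_smul, ← add_smul]

lemma herm_rank_one (A : Matrix (Fin n) (Fin n) ℂ) (hA : A.IsHermitian)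
    (u : Fin n → ℂ) (hu : u ≠ 0) (h : ∀ W, ∃ c : ℂ, A.mulVec W = c • u) :
    ∃ κ : ℂ, ∀ i j, A i j = κ * (u i * star (u j)) := by
  obtain ⟨i₀, hi₀⟩ := Function.ne_iff.mp hu
  simp only [Pi.zero_apply] at hi₀
  choose c hc using h
  have hcol : ∀ i j, A i j = c (Pi.single j 1) * u i := by
    intro i j
    have := congrFun (hc (Pi.single j 1)) i
    simpa [mulVec_single] using this
  have herm : ∀ i j, A i j = star (c (Pi.single i 1)) * star (u j) := by
    intro i j
    rw [← hA.apply i j, hcol j i, star_mul']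
  refine ⟨star (c (Pi.single i₀ 1)) / u i₀, ?_⟩
  intro i j
  have key := (hcol i₀ j).symm.trans (herm i₀ j)
  rw [hcol i j, div_mul_eq_mul_div, eq_div_iff hi₀]
  linear_combination u i * key

lemma not_li_real (A B : Matrix (Fin n) (Fin n) ℂ)
    (hA : A.IsHermitian) (hB : B.IsHermitian)
    (hdep : ∀ V, Dep (A.mulVec V) (B.mulVec V)) :
    ∃ s t : ℝ, ¬ (s = 0 ∧ t = 0) ∧ s • A + t • B = 0 := by
  by_cases hA0 : A = 0
  · exact ⟨1, 0, by norm_num, by simp [hA0]⟩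
  have hex : ∃ l : ℂ, B = l • A := by
    by_contra hnot
    obtain ⟨u, hu, hAs, hBs⟩ := range_lemma A B hdep hA0 hnot
    obtain ⟨κ, hκ⟩ := herm_rank_one A hA u hu hAs
    obtain ⟨κ', hκ'⟩ := herm_rank_one B hB u hu hBs
    have hκ0 : κ ≠ 0 := by
      intro h
      apply hA0
      ext i j
      rw [hκ i j, h, zero_mul]
      rfl
    apply hnot
    refine ⟨κ' / κ, ?_⟩
    ext i j
    rw [Matrix.smul_apply, smul_eq_mul, hκ i j, hκ' i j]
    field_simp
  obtain ⟨l, hl⟩ := hex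
  have hAeq : Aᴴ = A := hA
  have hBeq : Bᴴ = B := hB
  have hls : star l • A = l • A := by
    calc star l • A = star l • Aᴴ := by rw [hAeq]
      _ = (l • A)ᴴ := by rw [Matrix.conjTranspose_smul]
      _ = Bᴴ := by rw [hl]
      _ = B := hBeq
      _ = l • A := hl
  have hsub : (star l - l) • A = 0 := by rw [sub_smul, hls, sub_self]
  have hstar : star l = l := by
    rcases smul_eq_zero.mp hsub with h | h
    · exact sub_eq_zero.mp h
    · exact absurd h hA0
  have hre : (l.re : ℂ) = l := Complex.conj_eq_iff_re.mp hstar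
  refine ⟨l.re, -1, by norm_num, ?_⟩
  rw [hl]
  ext i j
  simp only [Matrix.add_apply, Matrix.smul_apply, Matrix.zero_apply, smul_eq_mul,
    Complex.real_smul, Complex.ofReal_neg, Complex.ofReal_one]
  linear_combination A i j * hre

end CondAF

open CondAF in
/-- For two Hermitian matrices (case `d = 2`), conditions (a) and (f) are
equivalent: `A₁, A₂` are linearly independent over ℝ iff there exists a
vector `V` with `A₁V, A₂V` linearly independent over ℂ. -/
theorem condition_a_iff_condition_f_of_two (n : ℕ)
    (A₁ A₂ : Matrix (Fin n) (Fin n) ℂ)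
    (h₁ : A₁.IsHermitian) (h₂ : A₂.IsHermitian) :
    LinearIndependent ℝ ![A₁, A₂] ↔
      ∃ V : Fin n → ℂ, LinearIndependent ℂ ![A₁.mulVec V, A₂.mulVec V] := by
  constructor
  · intro hLI
    by_contra hnf
    push_neg at hnf
    have hdep : ∀ V, Dep (A₁.mulVec V) (A₂.mulVec V) := fun V =>
      dep_of_not_li (hnf V)
    obtain ⟨s, t, hne, heq⟩ := not_li_real A₁ A₂ h₁ h₂ hdep
    exact hne (LinearIndependent.pair_iff.mp hLI s t heq)
  · rintro ⟨V, hV⟩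
    rw [LinearIndependent.pair_iff]
    intro s t hst
    have h0 := congrArg (fun M => Matrix.mulVec M V) hst
    simp only [Matrix.add_mulVec, Matrix.smul_mulVec, Matrix.zero_mulVec] at h0
    have h0' : (s : ℂ) • A₁.mulVec V + (t : ℂ) • A₂.mulVec V = 0 := by
      rw [← h0]
      funext k
      simp [Complex.real_smul]
    have := LinearIndependent.pair_iff.mp hV (s : ℂ) (t : ℂ) h0'
    exact ⟨Complex.ofReal_eq_zero.mp this.1, Complex.ofReal_eq_zero.mp this.2⟩
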